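/- In Tzafriri's space Y = Ti(2;1/2), for every n ≥ 4, ∥∑_{i=1}^n e_i∥ = √n/2, where (e_i) is the unit vector basis. -/

import Mathlib

private noncomputable def xF (F : Finset ℕ) : ℕ →₀ ℝ := ∑ i ∈ F, Finsupp.single i (1 : ℝ)

private lemma xF_apply (F : Finset ℕ) (j : ℕ) :
    xF F j = if j ∈ F then 1 else 0 := by
  rw [xF, Finsupp.finset_sum_apply]
  simp [Finsupp.single_apply]

private lemma filter_xF (F E : Finset ℕ) :
    (xF F).filter (· ∈ E) = xF (F ∩ E) := by
  ext j
  by_cases hj : j ∈ E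
  · rw [Finsupp.filter_apply_pos _ _ hj, xF_apply, xF_apply]
    simp [Finset.mem_inter, hj]
  · rw [Finsupp.filter_apply_neg _ _ hj, xF_apply]
    simp [Finset.mem_inter, hj]

private lemma iSup_abs_xF (F : Finset ℕ) (hF : F.Nonempty) :
    (⨆ i : ℕ, |xF F i|) = 1 := by
  obtain ⟨a, ha⟩ := hF
  have hb : ∀ i : ℕ, |xF F i| ≤ 1 := by
    intro i; rw [xF_apply]; split_ifs <;> norm_num
  apply le_antisymm (ciSup_le hb)
  have hbdd : BddAbove (Set.range fun i : ℕ => |xF F i|) :=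
    ⟨1, by rintro _ ⟨i, rfl⟩; exact hb i⟩
  have : |xF F a| ≤ ⨆ i : ℕ, |xF F i| := le_ciSup hbdd a
  rwa [xF_apply, if_pos ha, abs_one] at this

section
variable (N : (ℕ →₀ ℝ) → ℝ)
    (himp : ∀ x : ℕ →₀ ℝ, N x = max (⨆ i : ℕ, |x i|)
      (sSup {s : ℝ | ∃ n : ℕ, ∃ E : Fin n → Finset ℕ,
        (∀ i j : Fin n, i < j → ∀ a ∈ E i, ∀ b ∈ E j, a < b) ∧
        s = (1 / (2 * Real.sqrt n)) * ∑ i, N (x.filter (· ∈ E i))}))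

include himp

private lemma N_nonneg (x : ℕ →₀ ℝ) : 0 ≤ N x := by
  rw [himp x]
  exact le_max_of_le_left (Real.iSup_nonneg fun i => abs_nonneg _)

private lemma N_zero : N 0 = 0 := by
  have h0 : 0 ≤ N 0 := N_nonneg N himp 0
  have heq := himp 0
  rw [show (⨆ i : ℕ, |(0 : ℕ →₀ ℝ) i|) = 0 by simp] at heq
  set T := {s : ℝ | ∃ n : ℕ, ∃ E : Fin n → Finset ℕ,
        (∀ i j : Fin n, i < j → ∀ a ∈ E i, ∀ b ∈ E j, a < b) ∧
        s = (1 / (2 * Real.sqrt n)) * ∑ i, N ((0 : ℕ →₀ ℝ).filter (· ∈ E i))} with hT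
  by_cases hbdd : BddAbove T
  · have hmem : 2 * N 0 ∈ T := by
      refine ⟨16, fun _ => ∅, by simp, ?_⟩
      rw [show ((16 : ℕ) : ℝ) = 4 ^ 2 by norm_num, Real.sqrt_sq (by norm_num : (0:ℝ) ≤ 4)]
      simp only [Finsupp.filter_zero, Finset.sum_const, Finset.card_univ, Fintype.card_fin,
        nsmul_eq_mul]
      ring
    have h1 : 2 * N 0 ≤ sSup T := le_csSup hbdd hmem
    have h2 : sSup T ≤ N 0 := heq ▸ le_max_right _ _
    linarith
  · rw [Real.sSup_of_not_bddAbove hbdd] at heq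
    simpa using heq

private lemma one_le_N (F : Finset ℕ) (hF : F.Nonempty) : 1 ≤ N (xF F) := by
  rw [himp (xF F), ← iSup_abs_xF F hF]
  exact le_max_left _ _

omit himp in
private lemma disj_of_cond {m : ℕ} {E : Fin m → Finset ℕ}
    (hE : ∀ i j : Fin m, i < j → ∀ a ∈ E i, ∀ b ∈ E j, a < b) :
    ∀ i j : Fin m, i ≠ j → Disjoint (E i) (E j) := by
  intro i j hij
  rcases lt_or_gt_of_ne hij with h | h
  · exact Finset.disjoint_left.2 fun a hai haj => lt_irrefl a (hE i j h a hai a haj)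
  · exact Finset.disjoint_left.2 fun a hai haj => lt_irrefl a (hE j i h a haj a hai)

omit himp in
private lemma cauchy_step {m : ℕ} (hm : 0 < m) (F : Finset ℕ) (E : Fin m → Finset ℕ)
    (hdisj : ∀ i j : Fin m, i ≠ j → Disjoint (E i) (E j))
    (hbound : ∀ i : Fin m, N (xF (F ∩ E i)) ≤ Real.sqrt ((F ∩ E i).card)) :
    (1 / (2 * Real.sqrt m)) * ∑ i : Fin m, N (xF (F ∩ E i)) ≤ Real.sqrt F.card / 2 := by
  have hsm : (0:ℝ) < Real.sqrt m := Real.sqrt_pos.2 (by exact_mod_cast hm)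
  have hcs : ∑ i : Fin m, Real.sqrt ((F ∩ E i).card) ≤
      Real.sqrt m * Real.sqrt (∑ i : Fin m, ((F ∩ E i).card : ℝ)) := by
    rw [← Real.sqrt_mul (by positivity)]
    rw [Real.le_sqrt (Finset.sum_nonneg fun i _ => Real.sqrt_nonneg _)
      (by positivity)]
    calc (∑ i : Fin m, Real.sqrt ((F ∩ E i).card)) ^ 2
        ≤ (Finset.univ.card : ℝ) * ∑ i : Fin m, Real.sqrt ((F ∩ E i).card) ^ 2 :=
          sq_sum_le_card_mul_sum_sq
      _ = (m : ℝ) * ∑ i : Fin m, ((F ∩ E i).card : ℝ) := by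
          simp [Real.sq_sqrt (Nat.cast_nonneg _)]
  have hcard : (∑ i : Fin m, ((F ∩ E i).card : ℝ)) ≤ (F.card : ℝ) := by
    have h1 : ∑ i : Fin m, (F ∩ E i).card =
        (Finset.univ.biUnion fun i : Fin m => F ∩ E i).card :=
      (Finset.card_biUnion fun i _ j _ hij =>
        Finset.disjoint_of_subset_left Finset.inter_subset_right
          (Finset.disjoint_of_subset_right Finset.inter_subset_right (hdisj i j hij))).symm
    have h2 : (Finset.univ.biUnion fun i : Fin m => F ∩ E i) ⊆ F :=
      Finset.biUnion_subset.2 fun i _ => Finset.inter_subset_left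
    have h3 : ∑ i : Fin m, (F ∩ E i).card ≤ F.card := h1 ▸ Finset.card_le_card h2
    exact_mod_cast h3
  calc (1 / (2 * Real.sqrt m)) * ∑ i : Fin m, N (xF (F ∩ E i))
      ≤ (1 / (2 * Real.sqrt m)) * (Real.sqrt m * Real.sqrt (F.card : ℝ)) := by
        apply mul_le_mul_of_nonneg_left _ (by positivity)
        refine le_trans (Finset.sum_le_sum fun i _ => hbound i) (le_trans hcs ?_)
        exact mul_le_mul_of_nonneg_left (Real.sqrt_le_sqrt hcard) (Real.sqrt_nonneg _)
    _ = Real.sqrt F.card / 2 := by field_simp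

private lemma N_le_sqrt : ∀ F : Finset ℕ, N (xF F) ≤ Real.sqrt F.card := by
  intro F
  induction F using Finset.strongInduction with
  | _ F IH =>
  rcases F.eq_empty_or_nonempty with rfl | hF
  · simp [xF, N_zero N himp]
  · have heq := himp (xF F)
    rw [iSup_abs_xF F hF] at heq
    have hr1 : (1:ℝ) ≤ Real.sqrt F.card := by
      rw [Real.one_le_sqrt]
      exact_mod_cast Finset.card_pos.2 hF
    have hkey : ∀ s ∈ {s : ℝ | ∃ m : ℕ, ∃ E : Fin m → Finset ℕ,
        (∀ i j : Fin m, i < j → ∀ a ∈ E i, ∀ b ∈ E j, a < b) ∧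
        s = (1 / (2 * Real.sqrt m)) * ∑ i, N ((xF F).filter (· ∈ E i))},
        s ≤ max (N (xF F) / 2) (Real.sqrt F.card / 2) := by
      rintro s ⟨m, E, hE, rfl⟩
      have hdisj := disj_of_cond hE
      rcases Nat.eq_zero_or_pos m with rfl | hm
      · simp only [Finset.univ_eq_empty, Finset.sum_empty, mul_zero]
        exact le_max_of_le_right (div_nonneg (Real.sqrt_nonneg _) (by norm_num))
      simp only [filter_xF]
      by_cases hcover : ∃ j : Fin m, F ⊆ E j
      · obtain ⟨j, hj⟩ := hcover
        have hsum : ∑ i : Fin m, N (xF (F ∩ E i)) = N (xF F) := by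
          rw [Finset.sum_eq_single j]
          · rw [Finset.inter_eq_left.2 hj]
          · intro i _ hij
            have : F ∩ E i = ∅ := by
              rw [Finset.eq_empty_iff_forall_notMem]
              intro a ha
              rw [Finset.mem_inter] at ha
              exact (Finset.disjoint_left.1 (hdisj i j hij) ha.2) (hj ha.1)
            rw [this, show xF ∅ = 0 by simp [xF], N_zero N himp]
          · simp
        rw [hsum]
        refine le_max_of_le_left ?_
        have h1 : (1:ℝ) ≤ Real.sqrt m := by
          rw [Real.one_le_sqrt]; exact_mod_cast hm
        have hN := N_nonneg N himp (xF F)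
        calc (1 / (2 * Real.sqrt m)) * N (xF F) ≤ (1 / 2) * N (xF F) := by
              apply mul_le_mul_of_nonneg_right _ hN
              apply one_div_le_one_div_of_le (by norm_num)
              linarith
          _ = N (xF F) / 2 := by ring
      · push_neg at hcover
        refine le_max_of_le_right (cauchy_step N hm F E hdisj fun i => ?_)
        refine IH _ ⟨Finset.inter_subset_left, fun hsub => hcover i fun a ha => ?_⟩
        exact (Finset.mem_inter.1 (hsub ha)).2
    have hne : (0:ℝ) ∈ {s : ℝ | ∃ m : ℕ, ∃ E : Fin m → Finset ℕ,
        (∀ i j : Fin m, i < j → ∀ a ∈ E i, ∀ b ∈ E j, a < b) ∧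
        s = (1 / (2 * Real.sqrt m)) * ∑ i, N ((xF F).filter (· ∈ E i))} :=
      ⟨0, fun i => i.elim0, fun i => i.elim0, by simp⟩
    have hsup := csSup_le ⟨0, hne⟩ hkey
    have hle : N (xF F) ≤ max 1 (max (N (xF F) / 2) (Real.sqrt F.card / 2)) :=
      le_trans (le_of_eq heq) (max_le_max le_rfl hsup)
    rcases le_max_iff.1 hle with h | h
    · linarith
    · rcases le_max_iff.1 h with h' | h'
      · have hN := N_nonneg N himp (xF F)
        linarith
      · linarith
end

/-- in Tzafriri's space `Y = Ti(2;1/2)` (norm given implicitly by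
`‖x‖ = max(‖x‖_∞, sup_{n, E_1 < ... < E_n} (1/(2√n)) ∑ ‖E_i x‖)`), for every
`n ≥ 4`, `‖∑_{i=1}^n e_i‖ = √n / 2`. -/
theorem stmt5 (N : (ℕ →₀ ℝ) → ℝ)
    (himp : ∀ x : ℕ →₀ ℝ, N x = max (⨆ i : ℕ, |x i|)
      (sSup {s : ℝ | ∃ n : ℕ, ∃ E : Fin n → Finset ℕ,
        (∀ i j : Fin n, i < j → ∀ a ∈ E i, ∀ b ∈ E j, a < b) ∧
        s = (1 / (2 * Real.sqrt n)) * ∑ i, N (x.filter (· ∈ E i))}))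
    (n : ℕ) (hn : 4 ≤ n) :
    N (∑ i ∈ Finset.range n, Finsupp.single i (1 : ℝ)) = Real.sqrt n / 2 := by
  have hx : (∑ i ∈ Finset.range n, Finsupp.single i (1 : ℝ)) = xF (Finset.range n) := rfl
  rw [hx]
  have hnpos : 0 < n := by omega
  have hne : (Finset.range n).Nonempty := Finset.nonempty_range_iff.2 (by omega)
  have heq := himp (xF (Finset.range n))
  rw [iSup_abs_xF _ hne] at heq
  have hsn : (0:ℝ) < Real.sqrt n := Real.sqrt_pos.2 (by exact_mod_cast hnpos)
  have hupper : ∀ s ∈ {s : ℝ | ∃ m : ℕ, ∃ E : Fin m → Finset ℕ,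
      (∀ i j : Fin m, i < j → ∀ a ∈ E i, ∀ b ∈ E j, a < b) ∧
      s = (1 / (2 * Real.sqrt m)) * ∑ i, N ((xF (Finset.range n)).filter (· ∈ E i))},
      s ≤ Real.sqrt n / 2 := by
    rintro s ⟨m, E, hE, rfl⟩
    have hdisj := disj_of_cond hE
    rcases Nat.eq_zero_or_pos m with rfl | hm
    · simp only [Finset.univ_eq_empty, Finset.sum_empty, mul_zero]
      positivity
    simp only [filter_xF]
    have := cauchy_step N hm (Finset.range n) E hdisj
      (fun i => N_le_sqrt N himp _)
    simpa [Finset.card_range] using this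
  have hmem : Real.sqrt n / 2 ∈ {s : ℝ | ∃ m : ℕ, ∃ E : Fin m → Finset ℕ,
      (∀ i j : Fin m, i < j → ∀ a ∈ E i, ∀ b ∈ E j, a < b) ∧
      s = (1 / (2 * Real.sqrt m)) * ∑ i, N ((xF (Finset.range n)).filter (· ∈ E i))} := by
    refine ⟨n, fun i => {(i : ℕ)}, ?_, ?_⟩
    · intro i j hij a ha b hb
      rw [Finset.mem_singleton] at ha hb
      subst ha; subst hb
      exact hij
    · have hfe : ∀ i : Fin n,
          (xF (Finset.range n)).filter (· ∈ ({(i : ℕ)} : Finset ℕ)) = xF {(i : ℕ)} := by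
        intro i
        rw [filter_xF]
        congr 1
        exact Finset.inter_eq_right.2 (by simp [Finset.singleton_subset_iff, i.isLt])
      have hNi : ∀ i : Fin n, N (xF {(i : ℕ)}) = 1 := fun i =>
        le_antisymm (by simpa using N_le_sqrt N himp {(i : ℕ)})
          (one_le_N N himp _ ⟨_, Finset.mem_singleton_self _⟩)
      simp only [hfe, hNi, Finset.sum_const, Finset.card_univ, Fintype.card_fin,
        nsmul_eq_mul, mul_one]
      have hsq : Real.sqrt n * Real.sqrt n = (n : ℝ) :=
        Real.mul_self_sqrt (by positivity)
      field_simp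
      nlinarith [hsq]
  have hS : sSup {s : ℝ | ∃ m : ℕ, ∃ E : Fin m → Finset ℕ,
      (∀ i j : Fin m, i < j → ∀ a ∈ E i, ∀ b ∈ E j, a < b) ∧
      s = (1 / (2 * Real.sqrt m)) * ∑ i, N ((xF (Finset.range n)).filter (· ∈ E i))} =
      Real.sqrt n / 2 :=
    le_antisymm (csSup_le ⟨_, hmem⟩ hupper)
      (le_csSup ⟨Real.sqrt n / 2, fun s hs => hupper s hs⟩ hmem)
  have h2 : (2:ℝ) ≤ Real.sqrt n :=
    (Real.le_sqrt (by norm_num) (by positivity)).2 (by have h4 : (4:ℝ) ≤ n := (by exact_mod_cast hn); nlinarith)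
  rw [heq, hS]
  exact max_eq_right (by linarith)
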